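/- Let G be an exceptional graph with root r, and let x, y be the two degree-2 vertices of G other than r. Then either (i) x and y are non-adjacent with the same neighborhood, and the set of lengths of x–y paths in G is, modulo 3, exactly {1, 2}; or (ii) x and y are adjacent, and the set of lengths of x–y paths in G is, modulo 3, exactly {0, 1}. -/

import Mathlib

open SimpleGraph

/-- `ExcAux G r x y`: `G` is an exceptional graph with root `r`, whose two degree-2
vertices other than `r` are `x` and `y`.  Exceptional graphs are built recursively
from `K_{2,3}` (the root `r` being one of its three degree-2 vertices):
* if `x` and `y` are non-adjacent, one may add a new path of length 3 joining them;
* if `x` and `y` are adjacent, one may add a new vertex whose neighbourhood is that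
  of `x` (or of `y`), or a new 4-cycle `a b c d a` together with the edges `x a`
  and `c y`.
Newly added vertices are required to be fresh, i.e. isolated beforehand. -/
inductive ExcAux {V : Type*} : SimpleGraph V → V → V → V → Prop
  | base (r x y a b : V) (hd : ([r, x, y, a, b] : List V).Pairwise (· ≠ ·)) :
      ExcAux (SimpleGraph.fromEdgeSet
        {s(r, a), s(r, b), s(x, a), s(x, b), s(y, a), s(y, b)}) r x y
  | symm (G : SimpleGraph V) (r x y : V) : ExcAux G r x y → ExcAux G r y x
  | addPath (H : SimpleGraph V) (r x y p q : V) :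
      ExcAux H r x y → ¬ H.Adj x y → p ≠ q →
      H.neighborSet p = ∅ → H.neighborSet q = ∅ →
      ExcAux (H ⊔ SimpleGraph.fromEdgeSet {s(x, p), s(p, q), s(q, y)}) r p q
  | addTwin (H : SimpleGraph V) (r x y w a : V) :
      ExcAux H r x y → H.Adj x y → H.neighborSet x = {y, a} →
      H.neighborSet w = ∅ →
      ExcAux (H ⊔ SimpleGraph.fromEdgeSet {s(w, y), s(w, a)}) r x w
  | addSquare (H : SimpleGraph V) (r x y a b c d : V) :
      ExcAux H r x y → H.Adj x y →
      ([a, b, c, d] : List V).Pairwise (· ≠ ·) →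
      H.neighborSet a = ∅ → H.neighborSet b = ∅ →
      H.neighborSet c = ∅ → H.neighborSet d = ∅ →
      ExcAux (H ⊔ SimpleGraph.fromEdgeSet
        {s(a, b), s(b, c), s(c, d), s(d, a), s(x, a), s(c, y)}) r b d

set_option linter.unreachableTactic false
set_option linter.unusedTactic false

namespace ExcProof

variable {V : Type*}


lemma loop_len {G : SimpleGraph V} {u : V} (W : G.Walk u u) (h : W.IsPath) :
    W.length = 0 := by
  cases W with
  | nil => rfl
  | cons h' W' =>
    rw [Walk.cons_isPath_iff] at h
    exact absurd W'.end_mem_support h.2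

lemma firstStep {G : SimpleGraph V} {u t : V} (W : G.Walk u t) (hW : W.IsPath)
    (hne : u ≠ t) :
    ∃ w, w ∈ G.neighborSet u ∧ ∃ (W' : G.Walk w t),
      W'.IsPath ∧ u ∉ W'.support ∧ W.length = W'.length + 1 ∧
      W'.support ⊆ W.support := by
  cases W with
  | nil => exact absurd rfl hne
  | cons h' W' =>
    rw [Walk.cons_isPath_iff] at hW
    exact ⟨_, h', W', hW.1, hW.2, rfl, by
      simp [Walk.support_cons, List.subset_cons_of_subset _ (List.Subset.refl _)]⟩

lemma lastStep {G : SimpleGraph V} {u t : V} (W : G.Walk u t) (hW : W.IsPath)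
    (hne : u ≠ t) :
    ∃ w, w ∈ G.neighborSet t ∧ ∃ (W' : G.Walk u w),
      W'.IsPath ∧ t ∉ W'.support ∧ W.length = W'.length + 1 ∧
      W'.support ⊆ W.support := by
  obtain ⟨w, hw, W', h1, h2, h3, h4⟩ := firstStep W.reverse hW.reverse hne.symm
  refine ⟨w, hw, W'.reverse, h1.reverse, ?_, ?_, ?_⟩
  · simpa [Walk.support_reverse] using h2
  · rw [← W.length_reverse, h3, W'.length_reverse]
  · intro z hz
    have : z ∈ W.reverse.support := h4 (by simpa [Walk.support_reverse] using hz)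
    simpa [Walk.support_reverse] using this

lemma down {H G : SimpleGraph V} (B : Set V)
    (hB : ∀ u v, G.Adj u v → u ∉ B → v ∉ B → H.Adj u v)
    {s t : V} (W : G.Walk s t) (hdisj : ∀ z ∈ W.support, z ∉ B) :
    ∃ W' : H.Walk s t, W'.length = W.length ∧ W'.support = W.support := by
  induction W with
  | nil => exact ⟨Walk.nil, rfl, rfl⟩
  | @cons u v t h W ih =>
    have hu : u ∉ B := hdisj u (by simp)
    have hv : v ∉ B := hdisj v (by simp [Walk.support_cons, W.start_mem_support])
    obtain ⟨W', hl, hs⟩ := ih (fun z hz => hdisj z (by simp [Walk.support_cons, hz]))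
    exact ⟨Walk.cons (hB _ _ h hu hv) W', by simp [hl], by simp [Walk.support_cons, hs]⟩

lemma up {H G : SimpleGraph V} (hle : H ≤ G) {s t : V} (W : H.Walk s t) :
    ∃ W' : G.Walk s t, W'.length = W.length ∧ W'.support = W.support := by
  induction W with
  | nil => exact ⟨Walk.nil, rfl, rfl⟩
  | cons h W ih =>
    obtain ⟨W', hl, hs⟩ := ih
    exact ⟨Walk.cons (hle h) W', by simp [hl], by simp [Walk.support_cons, hs]⟩

lemma support_nbr {G : SimpleGraph V} {s t : V} (W : G.Walk s t)
    (h : W.length ≠ 0) : ∀ z ∈ W.support, (G.neighborSet z).Nonempty := by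
  induction W with
  | nil => simp at h
  | @cons u v t h' W ih =>
    intro z hz
    rw [Walk.support_cons, List.mem_cons] at hz
    rcases hz with rfl | hz
    · exact ⟨v, h'⟩
    · cases W with
      | nil =>
        simp only [Walk.support_nil, List.mem_singleton] at hz
        subst hz; exact ⟨u, h'.symm⟩
      | cons h'' W'' => exact ih (by simp) z hz

def Inv (G : SimpleGraph V) (x y : V) : Prop :=
  (¬ G.Adj x y ∧ G.neighborSet x = G.neighborSet y ∧
    (∀ p : G.Walk x y, p.IsPath → p.length % 3 = 1 ∨ p.length % 3 = 2) ∧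
    (∃ p : G.Walk x y, p.IsPath ∧ p.length % 3 = 1) ∧
    (∃ p : G.Walk x y, p.IsPath ∧ p.length % 3 = 2)) ∨
  (G.Adj x y ∧
    (∀ p : G.Walk x y, p.IsPath → p.length % 3 = 0 ∨ p.length % 3 = 1) ∧
    (∃ p : G.Walk x y, p.IsPath ∧ p.length % 3 = 0) ∧
    (∃ p : G.Walk x y, p.IsPath ∧ p.length % 3 = 1) ∧
    (∀ a, G.neighborSet x = {y, a} →
      ∀ p : G.Walk x a, p.IsPath → p.length % 3 = 0 ∨ p.length % 3 = 1) ∧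
    (∀ a, G.neighborSet y = {x, a} →
      ∀ p : G.Walk y a, p.IsPath → p.length % 3 = 0 ∨ p.length % 3 = 1))

lemma inv_symm {G : SimpleGraph V} {x y : V} (h : Inv G x y) : Inv G y x := by
  rcases h with ⟨h1, h2, h3, ⟨p1, hp1, hl1⟩, ⟨p2, hp2, hl2⟩⟩ |
    ⟨h1, h2, ⟨p1, hp1, hl1⟩, ⟨p2, hp2, hl2⟩, h5, h6⟩
  · exact Or.inl ⟨fun h => h1 h.symm, h2.symm,
      fun p hp => by simpa [Walk.length_reverse] using h3 p.reverse hp.reverse,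
      ⟨p1.reverse, hp1.reverse, by simpa [Walk.length_reverse] using hl1⟩,
      ⟨p2.reverse, hp2.reverse, by simpa [Walk.length_reverse] using hl2⟩⟩
  · exact Or.inr ⟨h1.symm,
      fun p hp => by simpa [Walk.length_reverse] using h2 p.reverse hp.reverse,
      ⟨p1.reverse, hp1.reverse, by simpa [Walk.length_reverse] using hl1⟩,
      ⟨p2.reverse, hp2.reverse, by simpa [Walk.length_reverse] using hl2⟩, h6, h5⟩

lemma addPath_case {H : SimpleGraph V} {x y p q : V}
    (ih : Inv H x y) (hnadj : ¬ H.Adj x y) (hpq : p ≠ q)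
    (hp : H.neighborSet p = ∅) (hq : H.neighborSet q = ∅) :
    Inv (H ⊔ SimpleGraph.fromEdgeSet {s(x, p), s(p, q), s(q, y)}) p q := by
  have ihl := ih.resolve_right (fun h => hnadj h.1)
  obtain ⟨-, -, huniv, ⟨P1, hP1, hP1l⟩, ⟨P2, hP2, hP2l⟩⟩ := ihl
  have hP1len : P1.length ≠ 0 := by omega
  have hnbr := support_nbr P1 hP1len
  have hnx : (H.neighborSet x).Nonempty := hnbr x P1.start_mem_support
  have hny : (H.neighborSet y).Nonempty := hnbr y P1.end_mem_support
  have hxp : x ≠ p := fun h => by rw [h, hp] at hnx; exact Set.not_nonempty_empty hnx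
  have hxq : x ≠ q := fun h => by rw [h, hq] at hnx; exact Set.not_nonempty_empty hnx
  have hyp : y ≠ p := fun h => by rw [h, hp] at hny; exact Set.not_nonempty_empty hny
  have hyq : y ≠ q := fun h => by rw [h, hq] at hny; exact Set.not_nonempty_empty hny
  have hxy : x ≠ y := by
    rintro rfl
    exact hP1len (loop_len P1 hP1)
  have hpAdj : ∀ v, ¬ H.Adj p v := fun v h => by
    have : v ∈ H.neighborSet p := h
    rw [hp] at this; exact this
  have hqAdj : ∀ v, ¬ H.Adj q v := fun v h => by
    have : v ∈ H.neighborSet q := h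
    rw [hq] at this; exact this
  set G : SimpleGraph V := H ⊔ SimpleGraph.fromEdgeSet {s(x, p), s(p, q), s(q, y)}
    with hGdef
  have hGadj : ∀ u v, G.Adj u v ↔ H.Adj u v ∨
      ((u = x ∧ v = p) ∨ (u = p ∧ v = x) ∨ (u = p ∧ v = q) ∨ (u = q ∧ v = p) ∨
       (u = q ∧ v = y) ∨ (u = y ∧ v = q)) := by
    intro u v
    rw [hGdef, sup_adj, fromEdgeSet_adj]
    simp only [Set.mem_insert_iff, Set.mem_singleton_iff, Sym2.eq_iff]
    constructor
    · rintro (h | ⟨((⟨rfl, rfl⟩|⟨rfl, rfl⟩)|(⟨rfl, rfl⟩|⟨rfl, rfl⟩)|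
        (⟨rfl, rfl⟩|⟨rfl, rfl⟩)), hne⟩)
      · exact Or.inl h
      all_goals simp
    · rintro (h | (⟨rfl, rfl⟩|⟨rfl, rfl⟩|⟨rfl, rfl⟩|⟨rfl, rfl⟩|⟨rfl, rfl⟩|⟨rfl, rfl⟩))
      · exact Or.inl h
      all_goals exact Or.inr ⟨by simp, by first
          | exact hxp | exact hxp.symm | exact hpq | exact hpq.symm
          | exact hyq | exact hyq.symm⟩
  have hNp : G.neighborSet p = {x, q} := by
    ext v
    simp only [mem_neighborSet, hGadj, Set.mem_insert_iff, Set.mem_singleton_iff]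
    constructor
    · rintro (h | (⟨h1, h2⟩|⟨h1, h2⟩|⟨h1, h2⟩|⟨h1, h2⟩|⟨h1, h2⟩|⟨h1, h2⟩))
      · exact absurd h (hpAdj v)
      · exact absurd h1.symm hxp
      · exact Or.inl h2
      · exact Or.inr h2
      · exact absurd h1 hpq
      · exact absurd h1 hpq
      · exact absurd h1.symm hyp
    · rintro (rfl | rfl)
      · exact Or.inr (by simp)
      · exact Or.inr (by simp)
  have hNq : G.neighborSet q = {p, y} := by
    ext v
    simp only [mem_neighborSet, hGadj, Set.mem_insert_iff, Set.mem_singleton_iff]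
    constructor
    · rintro (h | (⟨h1, h2⟩|⟨h1, h2⟩|⟨h1, h2⟩|⟨h1, h2⟩|⟨h1, h2⟩|⟨h1, h2⟩))
      · exact absurd h (hqAdj v)
      · exact absurd h1.symm hxq
      · exact absurd h1 hpq.symm
      · exact absurd h1 hpq.symm
      · exact Or.inl h2
      · exact Or.inr h2
      · exact absurd h1.symm hyq
    · rintro (rfl | rfl)
      · exact Or.inr (by simp)
      · exact Or.inr (by simp)
  have hB : ∀ u v, G.Adj u v → u ∉ ({p, q} : Set V) → v ∉ ({p, q} : Set V) →
      H.Adj u v := by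
    intro u v h hu hv
    rw [hGadj] at h
    rcases h with h | (⟨rfl, rfl⟩|⟨rfl, rfl⟩|⟨rfl, rfl⟩|⟨rfl, rfl⟩|⟨rfl, rfl⟩|⟨rfl, rfl⟩)
    · exact h
    all_goals simp at hu hv
  have hle : H ≤ G := le_sup_left
  have hGpq : G.Adj p q := by rw [hGadj]; simp
  have hGpx : G.Adj p x := by rw [hGadj]; simp
  have hGyq : G.Adj y q := by rw [hGadj]; simp
  right
  refine ⟨hGpq, ?_, ?_, ?_, ?_, ?_⟩
  · -- universal
    intro W hW
    obtain ⟨w1, hw1, W1, hW1, hps1, hl1, hss1⟩ := firstStep W hW hpq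
    rw [hNp] at hw1
    simp only [Set.mem_insert_iff, Set.mem_singleton_iff] at hw1
    rcases hw1 with h | h
    · subst h
      obtain ⟨w2, hw2, W2, hW2, hqs2, hl2, hss2⟩ := lastStep W1 hW1 hxq
      rw [hNq] at hw2
      simp only [Set.mem_insert_iff, Set.mem_singleton_iff] at hw2
      have h2 : w2 = y := by
        rcases hw2 with h | h
        · exact absurd (h ▸ hss2 W2.end_mem_support) hps1
        · exact h
      subst h2
      have hdisj : ∀ z ∈ W2.support, z ∉ ({p, q} : Set V) := by
        intro z hz
        simp only [Set.mem_insert_iff, Set.mem_singleton_iff]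
        rintro (rfl | rfl)
        · exact hps1 (hss2 hz)
        · exact hqs2 hz
      obtain ⟨W2', hl', hs'⟩ := down _ hB W2 hdisj
      have hW2' : W2'.IsPath := by
        rw [Walk.isPath_def, hs']; exact hW2.support_nodup
      have := huniv W2' hW2'
      omega
    · subst h
      have := loop_len W1 hW1
      omega
  · -- a path of length ≡ 0 [3]
    obtain ⟨Q, hQl, hQs⟩ := up hle P1
    have hQpath : Q.IsPath := by rw [Walk.isPath_def, hQs]; exact hP1.support_nodup
    have hpQ : p ∉ Q.support := by
      rw [hQs]; intro h
      have := hnbr p h; rw [hp] at this; exact Set.not_nonempty_empty this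
    have hqQ : q ∉ Q.support := by
      rw [hQs]; intro h
      have := hnbr q h; rw [hq] at this; exact Set.not_nonempty_empty this
    refine ⟨Walk.cons hGpx (Q.append (Walk.cons hGyq Walk.nil)), ?_, ?_⟩
    · rw [Walk.isPath_def]
      simp only [Walk.support_cons, Walk.support_append, Walk.support_nil,
        List.tail_cons, List.nodup_cons, List.mem_append, List.mem_singleton]
      refine ⟨?_, ?_⟩
      · rintro (h | rfl)
        · exact hpQ h
        · exact hpq rfl
      · rw [List.nodup_append]
        exact ⟨hQpath.support_nodup, List.nodup_singleton _,
          fun z hz => by simp; rintro rfl; exact hqQ hz⟩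
    · simp only [Walk.length_cons, Walk.length_append, Walk.length_nil, hQl]
      omega
  · -- the edge, length 1
    refine ⟨Walk.cons hGpq Walk.nil, ?_, by norm_num [Walk.length_cons, Walk.length_nil]⟩
    rw [Walk.isPath_def]
    simp [Walk.support_cons, Walk.support_nil, hpq]
  · -- Q-clause for p
    intro a hNa W hW
    have hax : a = x := by
      have hx : x ∈ ({q, a} : Set V) := by rw [← hNa, hNp]; simp
      simp only [Set.mem_insert_iff, Set.mem_singleton_iff] at hx
      rcases hx with h | h
      · exact absurd h hxq
      · exact h.symm
    subst hax
    obtain ⟨w1, hw1, W1, hW1, hps1, hl1, hss1⟩ := firstStep W hW hxp.symm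
    rw [hNp] at hw1
    simp only [Set.mem_insert_iff, Set.mem_singleton_iff] at hw1
    rcases hw1 with h | h
    · subst h
      have := loop_len W1 hW1
      omega
    · have h' := h.symm; subst h'
      obtain ⟨w2, hw2, W2, hW2, hqs2, hl2, hss2⟩ := firstStep W1 hW1 hxq.symm
      rw [hNq] at hw2
      simp only [Set.mem_insert_iff, Set.mem_singleton_iff] at hw2
      have h2 : w2 = y := by
        rcases hw2 with h | h
        · exact absurd (h ▸ hss2 W2.start_mem_support) hps1
        · exact h
      subst h2
      have hdisj : ∀ z ∈ W2.support, z ∉ ({p, q} : Set V) := by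
        intro z hz
        simp only [Set.mem_insert_iff, Set.mem_singleton_iff]
        rintro (rfl | rfl)
        · exact hps1 (hss2 hz)
        · exact hqs2 hz
      obtain ⟨W2', hl', hs'⟩ := down _ hB W2 hdisj
      have hW2' : W2'.IsPath := by
        rw [Walk.isPath_def, hs']; exact hW2.support_nodup
      have := huniv W2'.reverse hW2'.reverse
      rw [Walk.length_reverse] at this
      omega
  · -- Q-clause for q
    intro a hNa W hW
    have hay : a = y := by
      have hy : y ∈ ({p, a} : Set V) := by rw [← hNa, hNq]; simp
      simp only [Set.mem_insert_iff, Set.mem_singleton_iff] at hy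
      rcases hy with h | h
      · exact absurd h hyp
      · exact h.symm
    subst hay
    obtain ⟨w1, hw1, W1, hW1, hqs1, hl1, hss1⟩ := firstStep W hW hyq.symm
    rw [hNq] at hw1
    simp only [Set.mem_insert_iff, Set.mem_singleton_iff] at hw1
    rcases hw1 with h | h
    · have h' := h.symm; subst h'
      obtain ⟨w2, hw2, W2, hW2, hps2, hl2, hss2⟩ := firstStep W1 hW1 hyp.symm
      rw [hNp] at hw2
      simp only [Set.mem_insert_iff, Set.mem_singleton_iff] at hw2
      have h2 : w2 = x := by
        rcases hw2 with h | h
        · exact h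
        · exact absurd (h ▸ hss2 W2.start_mem_support) hqs1
      subst h2
      have hdisj : ∀ z ∈ W2.support, z ∉ ({p, q} : Set V) := by
        intro z hz
        simp only [Set.mem_insert_iff, Set.mem_singleton_iff]
        rintro (rfl | rfl)
        · exact hps2 hz
        · exact hqs1 (hss2 hz)
      obtain ⟨W2', hl', hs'⟩ := down _ hB W2 hdisj
      have hW2' : W2'.IsPath := by
        rw [Walk.isPath_def, hs']; exact hW2.support_nodup
      have := huniv W2' hW2'
      omega
    · subst h
      have := loop_len W1 hW1
      omega

lemma addTwin_case {H : SimpleGraph V} {x y w a : V}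
    (ih : Inv H x y) (hxy : H.Adj x y) (hNx : H.neighborSet x = {y, a})
    (hw : H.neighborSet w = ∅) :
    Inv (H ⊔ SimpleGraph.fromEdgeSet {s(w, y), s(w, a)}) x w := by
  have ihr := ih.resolve_left (fun h => h.1 hxy)
  obtain ⟨-, huniv, ⟨P0, hP0, hP0l⟩, ⟨P1, hP1, hP1l⟩, hQ1, -⟩ := ihr
  have hxa : H.Adj x a := by
    have : a ∈ H.neighborSet x := by rw [hNx]; simp
    exact this
  have hxyne : x ≠ y := hxy.ne
  have hxane : x ≠ a := hxa.ne
  have hwAdj : ∀ v, ¬ H.Adj w v := fun v h => by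
    have : v ∈ H.neighborSet w := h
    rw [hw] at this; exact this
  have hwx : w ≠ x := fun h => hwAdj y (h ▸ hxy)
  have hwy : w ≠ y := fun h => hwAdj x (h ▸ hxy.symm)
  have hwa : w ≠ a := fun h => hwAdj x (h ▸ hxa.symm)
  set G : SimpleGraph V := H ⊔ SimpleGraph.fromEdgeSet {s(w, y), s(w, a)} with hGdef
  have hGadj : ∀ u v, G.Adj u v ↔ H.Adj u v ∨
      ((u = w ∧ v = y) ∨ (u = y ∧ v = w) ∨ (u = w ∧ v = a) ∨ (u = a ∧ v = w)) := by
    intro u v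
    rw [hGdef, sup_adj, fromEdgeSet_adj]
    simp only [Set.mem_insert_iff, Set.mem_singleton_iff, Sym2.eq_iff]
    constructor
    · rintro (h | ⟨((⟨rfl, rfl⟩|⟨rfl, rfl⟩)|(⟨rfl, rfl⟩|⟨rfl, rfl⟩)), hne⟩)
      · exact Or.inl h
      all_goals simp
    · rintro (h | (⟨rfl, rfl⟩|⟨rfl, rfl⟩|⟨rfl, rfl⟩|⟨rfl, rfl⟩))
      · exact Or.inl h
      all_goals exact Or.inr ⟨by simp, by first
          | exact hwy | exact hwy.symm | exact hwa | exact hwa.symm⟩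
  have hB : ∀ u v, G.Adj u v → u ∉ ({w} : Set V) → v ∉ ({w} : Set V) →
      H.Adj u v := by
    intro u v h hu hv
    rw [hGadj] at h
    rcases h with h | (⟨rfl, rfl⟩|⟨rfl, rfl⟩|⟨rfl, rfl⟩|⟨rfl, rfl⟩)
    · exact h
    all_goals simp at hu hv
  have hle : H ≤ G := le_sup_left
  have hGNx : G.neighborSet x = {y, a} := by
    ext v
    simp only [mem_neighborSet, hGadj, Set.mem_insert_iff, Set.mem_singleton_iff]
    constructor
    · rintro (h | (⟨h1, h2⟩|⟨h1, h2⟩|⟨h1, h2⟩|⟨h1, h2⟩))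
      · have : v ∈ H.neighborSet x := h
        rw [hNx] at this; simpa using this
      · exact absurd h1.symm hwx
      · exact absurd h1 hxyne
      · exact absurd h1.symm hwx
      · exact absurd h1 hxane
    · rintro (rfl | rfl)
      · exact Or.inl hxy
      · exact Or.inl hxa
  have hGNw : G.neighborSet w = {y, a} := by
    ext v
    simp only [mem_neighborSet, hGadj, Set.mem_insert_iff, Set.mem_singleton_iff]
    constructor
    · rintro (h | (⟨h1, h2⟩|⟨h1, h2⟩|⟨h1, h2⟩|⟨h1, h2⟩))
      · exact absurd h (hwAdj v)
      · exact Or.inl h2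
      · exact absurd h1 hwy
      · exact Or.inr h2
      · exact absurd h1 hwa
    · rintro (rfl | rfl)
      · exact Or.inr (by simp)
      · exact Or.inr (by simp)
  have hGxy : G.Adj x y := hle hxy
  have hGyw : G.Adj y w := by rw [hGadj]; simp
  left
  refine ⟨?_, by rw [hGNx, hGNw], ?_, ?_, ?_⟩
  · -- non-adjacency
    rw [hGadj]
    rintro (h | (⟨h1, h2⟩|⟨h1, h2⟩|⟨h1, h2⟩|⟨h1, h2⟩))
    · have : w ∈ H.neighborSet x := h
      rw [hNx] at this
      simp only [Set.mem_insert_iff, Set.mem_singleton_iff] at this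
      rcases this with h' | h'
      · exact hwy h'
      · exact hwa h'
    · exact hwx h1.symm
    · exact hxyne h1
    · exact hwx h1.symm
    · exact hxane h1
  · -- universal
    intro W hW
    obtain ⟨w1, hw1, W1, hW1, hws1, hl1, hss1⟩ := lastStep W hW hwx.symm
    rw [hGNw] at hw1
    simp only [Set.mem_insert_iff, Set.mem_singleton_iff] at hw1
    have hdisj : ∀ z ∈ W1.support, z ∉ ({w} : Set V) := by
      intro z hz
      simp only [Set.mem_singleton_iff]
      rintro rfl
      exact hws1 hz
    rcases hw1 with h | h
    · subst h
      obtain ⟨W1', hl', hs'⟩ := down _ hB W1 hdisj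
      have hW1' : W1'.IsPath := by
        rw [Walk.isPath_def, hs']; exact hW1.support_nodup
      have := huniv W1' hW1'
      omega
    · subst h
      obtain ⟨W1', hl', hs'⟩ := down _ hB W1 hdisj
      have hW1' : W1'.IsPath := by
        rw [Walk.isPath_def, hs']; exact hW1.support_nodup
      have := hQ1 _ hNx W1' hW1'
      omega
  · -- length ≡ 1 : H-path of length ≡ 0 plus the edge y w
    have hP0len : P0.length ≠ 0 := fun h => hxyne (Walk.eq_of_length_eq_zero h)
    have hnbr := support_nbr P0 hP0len
    obtain ⟨Q, hQl, hQs⟩ := up hle P0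
    have hQpath : Q.IsPath := by rw [Walk.isPath_def, hQs]; exact hP0.support_nodup
    have hwQ : w ∉ Q.support := by
      rw [hQs]; intro h
      have := hnbr w h; rw [hw] at this; exact Set.not_nonempty_empty this
    refine ⟨Q.append (Walk.cons hGyw Walk.nil), ?_, ?_⟩
    · rw [Walk.isPath_def]
      simp only [Walk.support_append, Walk.support_cons, Walk.support_nil,
        List.tail_cons]
      rw [List.nodup_append]
      exact ⟨hQpath.support_nodup, List.nodup_singleton _,
        fun z hz => by simp; rintro rfl; exact hwQ hz⟩
    · simp only [Walk.length_append, Walk.length_cons, Walk.length_nil, hQl]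
      omega
  · -- length 2 : x y w
    refine ⟨Walk.cons hGxy (Walk.cons hGyw Walk.nil), ?_,
      by norm_num [Walk.length_cons, Walk.length_nil]⟩
    rw [Walk.isPath_def]
    simp [Walk.support_cons, Walk.support_nil, hxyne, hwx.symm, hwy.symm]

lemma addSquare_case {H : SimpleGraph V} {x y a b c d : V}
    (ih : Inv H x y) (hxy : H.Adj x y)
    (hd : ([a, b, c, d] : List V).Pairwise (· ≠ ·))
    (ha : H.neighborSet a = ∅) (hb : H.neighborSet b = ∅)
    (hc : H.neighborSet c = ∅) (hdd : H.neighborSet d = ∅) :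
    Inv (H ⊔ SimpleGraph.fromEdgeSet
        {s(a, b), s(b, c), s(c, d), s(d, a), s(x, a), s(c, y)}) b d := by
  have ihr := ih.resolve_left (fun h => h.1 hxy)
  obtain ⟨-, huniv, ⟨P0, hP0, hP0l⟩, ⟨P1, hP1, hP1l⟩, -, -⟩ := ihr
  simp only [List.pairwise_cons] at hd
  obtain ⟨h1, h2, h3, -⟩ := hd
  have hab : a ≠ b := h1 _ (by simp)
  have hac : a ≠ c := h1 _ (by simp)
  have had : a ≠ d := h1 _ (by simp)
  have hbc : b ≠ c := h2 _ (by simp)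
  have hbd : b ≠ d := h2 _ (by simp)
  have hcd : c ≠ d := h3 _ (by simp)
  have hxyne : x ≠ y := hxy.ne
  have haAdj : ∀ v, ¬ H.Adj a v := fun v h => by
    have : v ∈ H.neighborSet a := h; rw [ha] at this; exact this
  have hbAdj : ∀ v, ¬ H.Adj b v := fun v h => by
    have : v ∈ H.neighborSet b := h; rw [hb] at this; exact this
  have hcAdj : ∀ v, ¬ H.Adj c v := fun v h => by
    have : v ∈ H.neighborSet c := h; rw [hc] at this; exact this
  have hdAdj : ∀ v, ¬ H.Adj d v := fun v h => by
    have : v ∈ H.neighborSet d := h; rw [hdd] at this; exact this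
  have hxa : x ≠ a := fun h => haAdj y (h ▸ hxy)
  have hxb : x ≠ b := fun h => hbAdj y (h ▸ hxy)
  have hxc : x ≠ c := fun h => hcAdj y (h ▸ hxy)
  have hxd : x ≠ d := fun h => hdAdj y (h ▸ hxy)
  have hya : y ≠ a := fun h => haAdj x (h ▸ hxy.symm)
  have hyb : y ≠ b := fun h => hbAdj x (h ▸ hxy.symm)
  have hyc : y ≠ c := fun h => hcAdj x (h ▸ hxy.symm)
  have hyd : y ≠ d := fun h => hdAdj x (h ▸ hxy.symm)
  set G : SimpleGraph V := H ⊔ SimpleGraph.fromEdgeSet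
      {s(a, b), s(b, c), s(c, d), s(d, a), s(x, a), s(c, y)} with hGdef
  have hGadj : ∀ u v, G.Adj u v ↔ H.Adj u v ∨
      ((u = a ∧ v = b) ∨ (u = b ∧ v = a) ∨ (u = b ∧ v = c) ∨ (u = c ∧ v = b) ∨
       (u = c ∧ v = d) ∨ (u = d ∧ v = c) ∨ (u = d ∧ v = a) ∨ (u = a ∧ v = d) ∨
       (u = x ∧ v = a) ∨ (u = a ∧ v = x) ∨ (u = c ∧ v = y) ∨ (u = y ∧ v = c)) := by
    intro u v
    rw [hGdef, sup_adj, fromEdgeSet_adj]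
    simp only [Set.mem_insert_iff, Set.mem_singleton_iff, Sym2.eq_iff]
    constructor
    · rintro (h | ⟨((⟨rfl, rfl⟩|⟨rfl, rfl⟩)|(⟨rfl, rfl⟩|⟨rfl, rfl⟩)|
        (⟨rfl, rfl⟩|⟨rfl, rfl⟩)|(⟨rfl, rfl⟩|⟨rfl, rfl⟩)|
        (⟨rfl, rfl⟩|⟨rfl, rfl⟩)|(⟨rfl, rfl⟩|⟨rfl, rfl⟩)), hne⟩)
      · exact Or.inl h
      all_goals simp
    · rintro (h | (⟨rfl, rfl⟩|⟨rfl, rfl⟩|⟨rfl, rfl⟩|⟨rfl, rfl⟩|⟨rfl, rfl⟩|⟨rfl, rfl⟩|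
        ⟨rfl, rfl⟩|⟨rfl, rfl⟩|⟨rfl, rfl⟩|⟨rfl, rfl⟩|⟨rfl, rfl⟩|⟨rfl, rfl⟩))
      · exact Or.inl h
      all_goals exact Or.inr ⟨by simp, by first
          | exact hab | exact hab.symm | exact hbc | exact hbc.symm
          | exact hcd | exact hcd.symm | exact had | exact had.symm
          | exact hxa | exact hxa.symm | exact hyc | exact hyc.symm⟩
  have hB : ∀ u v, G.Adj u v → u ∉ ({a, b, c, d} : Set V) →
      v ∉ ({a, b, c, d} : Set V) → H.Adj u v := by
    intro u v h hu hv
    rw [hGadj] at h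
    rcases h with h | (⟨rfl, rfl⟩|⟨rfl, rfl⟩|⟨rfl, rfl⟩|⟨rfl, rfl⟩|⟨rfl, rfl⟩|⟨rfl, rfl⟩|
        ⟨rfl, rfl⟩|⟨rfl, rfl⟩|⟨rfl, rfl⟩|⟨rfl, rfl⟩|⟨rfl, rfl⟩|⟨rfl, rfl⟩)
    · exact h
    all_goals simp at hu hv
  have hle : H ≤ G := le_sup_left
  have hNa : G.neighborSet a = {b, d, x} := by
    ext v
    simp only [mem_neighborSet, hGadj, Set.mem_insert_iff, Set.mem_singleton_iff]
    constructor
    · rintro (h | (⟨h1, h2⟩|⟨h1, h2⟩|⟨h1, h2⟩|⟨h1, h2⟩|⟨h1, h2⟩|⟨h1, h2⟩|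
        ⟨h1, h2⟩|⟨h1, h2⟩|⟨h1, h2⟩|⟨h1, h2⟩|⟨h1, h2⟩|⟨h1, h2⟩)) <;>
        first
        | exact absurd h (haAdj v) | exact absurd h (hbAdj v)
        | exact absurd h (hcAdj v) | exact absurd h (hdAdj v)
        | exact Or.inl h2 | exact Or.inr h2
        | exact Or.inr (Or.inl h2) | exact Or.inr (Or.inr h2)
        | exact absurd h1 hab | exact absurd h1.symm hab
        | exact absurd h1 hac | exact absurd h1.symm hac
        | exact absurd h1 had | exact absurd h1.symm had
        | exact absurd h1 hbc | exact absurd h1.symm hbc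
        | exact absurd h1 hbd | exact absurd h1.symm hbd
        | exact absurd h1 hcd | exact absurd h1.symm hcd
        | exact absurd h1 hxa | exact absurd h1.symm hxa
        | exact absurd h1 hxb | exact absurd h1.symm hxb
        | exact absurd h1 hxc | exact absurd h1.symm hxc
        | exact absurd h1 hxd | exact absurd h1.symm hxd
        | exact absurd h1 hya | exact absurd h1.symm hya
        | exact absurd h1 hyb | exact absurd h1.symm hyb
        | exact absurd h1 hyc | exact absurd h1.symm hyc
        | exact absurd h1 hyd | exact absurd h1.symm hyd
    · rintro (rfl | rfl | rfl)
      · exact Or.inr (by simp)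
      · exact Or.inr (by simp)
      · exact Or.inr (by simp)
  have hNb : G.neighborSet b = {a, c} := by
    ext v
    simp only [mem_neighborSet, hGadj, Set.mem_insert_iff, Set.mem_singleton_iff]
    constructor
    · rintro (h | (⟨h1, h2⟩|⟨h1, h2⟩|⟨h1, h2⟩|⟨h1, h2⟩|⟨h1, h2⟩|⟨h1, h2⟩|
        ⟨h1, h2⟩|⟨h1, h2⟩|⟨h1, h2⟩|⟨h1, h2⟩|⟨h1, h2⟩|⟨h1, h2⟩)) <;>
        first
        | exact absurd h (haAdj v) | exact absurd h (hbAdj v)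
        | exact absurd h (hcAdj v) | exact absurd h (hdAdj v)
        | exact Or.inl h2 | exact Or.inr h2
        | exact Or.inr (Or.inl h2) | exact Or.inr (Or.inr h2)
        | exact absurd h1 hab | exact absurd h1.symm hab
        | exact absurd h1 hac | exact absurd h1.symm hac
        | exact absurd h1 had | exact absurd h1.symm had
        | exact absurd h1 hbc | exact absurd h1.symm hbc
        | exact absurd h1 hbd | exact absurd h1.symm hbd
        | exact absurd h1 hcd | exact absurd h1.symm hcd
        | exact absurd h1 hxa | exact absurd h1.symm hxa
        | exact absurd h1 hxb | exact absurd h1.symm hxb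
        | exact absurd h1 hxc | exact absurd h1.symm hxc
        | exact absurd h1 hxd | exact absurd h1.symm hxd
        | exact absurd h1 hya | exact absurd h1.symm hya
        | exact absurd h1 hyb | exact absurd h1.symm hyb
        | exact absurd h1 hyc | exact absurd h1.symm hyc
        | exact absurd h1 hyd | exact absurd h1.symm hyd
    · rintro (rfl | rfl)
      · exact Or.inr (by simp)
      · exact Or.inr (by simp)
  have hNc : G.neighborSet c = {b, d, y} := by
    ext v
    simp only [mem_neighborSet, hGadj, Set.mem_insert_iff, Set.mem_singleton_iff]
    constructor
    · rintro (h | (⟨h1, h2⟩|⟨h1, h2⟩|⟨h1, h2⟩|⟨h1, h2⟩|⟨h1, h2⟩|⟨h1, h2⟩|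
        ⟨h1, h2⟩|⟨h1, h2⟩|⟨h1, h2⟩|⟨h1, h2⟩|⟨h1, h2⟩|⟨h1, h2⟩)) <;>
        first
        | exact absurd h (haAdj v) | exact absurd h (hbAdj v)
        | exact absurd h (hcAdj v) | exact absurd h (hdAdj v)
        | exact Or.inl h2 | exact Or.inr h2
        | exact Or.inr (Or.inl h2) | exact Or.inr (Or.inr h2)
        | exact absurd h1 hab | exact absurd h1.symm hab
        | exact absurd h1 hac | exact absurd h1.symm hac
        | exact absurd h1 had | exact absurd h1.symm had
        | exact absurd h1 hbc | exact absurd h1.symm hbc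
        | exact absurd h1 hbd | exact absurd h1.symm hbd
        | exact absurd h1 hcd | exact absurd h1.symm hcd
        | exact absurd h1 hxa | exact absurd h1.symm hxa
        | exact absurd h1 hxb | exact absurd h1.symm hxb
        | exact absurd h1 hxc | exact absurd h1.symm hxc
        | exact absurd h1 hxd | exact absurd h1.symm hxd
        | exact absurd h1 hya | exact absurd h1.symm hya
        | exact absurd h1 hyb | exact absurd h1.symm hyb
        | exact absurd h1 hyc | exact absurd h1.symm hyc
        | exact absurd h1 hyd | exact absurd h1.symm hyd
    · rintro (rfl | rfl | rfl)
      · exact Or.inr (by simp)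
      · exact Or.inr (by simp)
      · exact Or.inr (by simp)
  have hNd : G.neighborSet d = {c, a} := by
    ext v
    simp only [mem_neighborSet, hGadj, Set.mem_insert_iff, Set.mem_singleton_iff]
    constructor
    · rintro (h | (⟨h1, h2⟩|⟨h1, h2⟩|⟨h1, h2⟩|⟨h1, h2⟩|⟨h1, h2⟩|⟨h1, h2⟩|
        ⟨h1, h2⟩|⟨h1, h2⟩|⟨h1, h2⟩|⟨h1, h2⟩|⟨h1, h2⟩|⟨h1, h2⟩)) <;>
        first
        | exact absurd h (haAdj v) | exact absurd h (hbAdj v)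
        | exact absurd h (hcAdj v) | exact absurd h (hdAdj v)
        | exact Or.inl h2 | exact Or.inr h2
        | exact Or.inr (Or.inl h2) | exact Or.inr (Or.inr h2)
        | exact absurd h1 hab | exact absurd h1.symm hab
        | exact absurd h1 hac | exact absurd h1.symm hac
        | exact absurd h1 had | exact absurd h1.symm had
        | exact absurd h1 hbc | exact absurd h1.symm hbc
        | exact absurd h1 hbd | exact absurd h1.symm hbd
        | exact absurd h1 hcd | exact absurd h1.symm hcd
        | exact absurd h1 hxa | exact absurd h1.symm hxa
        | exact absurd h1 hxb | exact absurd h1.symm hxb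
        | exact absurd h1 hxc | exact absurd h1.symm hxc
        | exact absurd h1 hxd | exact absurd h1.symm hxd
        | exact absurd h1 hya | exact absurd h1.symm hya
        | exact absurd h1 hyb | exact absurd h1.symm hyb
        | exact absurd h1 hyc | exact absurd h1.symm hyc
        | exact absurd h1 hyd | exact absurd h1.symm hyd
    · rintro (rfl | rfl)
      · exact Or.inr (by simp)
      · exact Or.inr (by simp)
  have hGba : G.Adj b a := by rw [hGadj]; simp
  have hGad : G.Adj a d := by rw [hGadj]; simp
  have hGax : G.Adj a x := by rw [hGadj]; simp
  have hGyc : G.Adj y c := by rw [hGadj]; simp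
  have hGcd : G.Adj c d := by rw [hGadj]; simp
  left
  refine ⟨?_, by rw [hNb, hNd, Set.pair_comm], ?_, ?_, ?_⟩
  · -- non-adjacency of b and d
    rw [hGadj]
    rintro (h | (⟨e1, e2⟩|⟨e1, e2⟩|⟨e1, e2⟩|⟨e1, e2⟩|⟨e1, e2⟩|⟨e1, e2⟩|
        ⟨e1, e2⟩|⟨e1, e2⟩|⟨e1, e2⟩|⟨e1, e2⟩|⟨e1, e2⟩|⟨e1, e2⟩))
    · exact hbAdj d h
    all_goals first
      | exact hab e1.symm | exact hab.symm e1 | exact hbc e1 | exact hbc.symm e1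
      | exact hbd e1 | exact hbd.symm e1 | exact hcd e1 | exact hcd.symm e1
      | exact had e1 | exact had.symm e1 | exact hac e1 | exact hac.symm e1
      | exact hxb e1.symm | exact hyb e1.symm
      | exact hab e2.symm | exact hab.symm e2 | exact hbc e2 | exact hbc.symm e2
      | exact hbd e2 | exact hbd.symm e2 | exact hcd e2 | exact hcd.symm e2
      | exact had e2 | exact had.symm e2 | exact hac e2 | exact hac.symm e2
      | exact hxd e2.symm | exact hyd e2.symm | exact had e2.symm | exact hcd e2.symm
  · -- universal
    intro W hW
    obtain ⟨w1, hw1, W1, hW1, hbs1, hl1, hss1⟩ := firstStep W hW hbd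
    rw [hNb] at hw1
    simp only [Set.mem_insert_iff, Set.mem_singleton_iff] at hw1
    rcases hw1 with h | h
    · -- first step b → a
      have h' := h.symm; subst h'
      obtain ⟨w2, hw2, W2, hW2, has2, hl2, hss2⟩ := firstStep W1 hW1 had
      rw [hNa] at hw2
      simp only [Set.mem_insert_iff, Set.mem_singleton_iff] at hw2
      rcases hw2 with h | h | h
      · exact absurd (h ▸ hss2 W2.start_mem_support) hbs1
      · have h' := h.symm; subst h'
        have := loop_len W2 hW2
        omega
      · have h' := h.symm; subst h'
        obtain ⟨w3, hw3, W3, hW3, hds3, hl3, hss3⟩ := lastStep W2 hW2 hxd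
        rw [hNd] at hw3
        simp only [Set.mem_insert_iff, Set.mem_singleton_iff] at hw3
        have h3 : w3 = c := by
          rcases hw3 with h | h
          · exact h
          · exact absurd (h ▸ hss3 W3.end_mem_support) has2
        have h3' := h3.symm; subst h3'
        obtain ⟨w4, hw4, W4, hW4, hcs4, hl4, hss4⟩ := lastStep W3 hW3 hxc
        rw [hNc] at hw4
        simp only [Set.mem_insert_iff, Set.mem_singleton_iff] at hw4
        have h4 : w4 = y := by
          rcases hw4 with h | h | h
          · exact absurd (h ▸ hss2 (hss3 (hss4 W4.end_mem_support))) hbs1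
          · exact absurd (h ▸ hss4 W4.end_mem_support) hds3
          · exact h
        have h4' := h4.symm; subst h4'
        have hdisj : ∀ z ∈ W4.support, z ∉ ({a, b, c, d} : Set V) := by
          intro z hz
          simp only [Set.mem_insert_iff, Set.mem_singleton_iff]
          rintro (rfl | rfl | rfl | rfl)
          · exact has2 (hss3 (hss4 hz))
          · exact hbs1 (hss2 (hss3 (hss4 hz)))
          · exact hcs4 hz
          · exact hds3 (hss4 hz)
        obtain ⟨W4', hl', hs'⟩ := down _ hB W4 hdisj
        have hW4' : W4'.IsPath := by
          rw [Walk.isPath_def, hs']; exact hW4.support_nodup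
        have := huniv W4' hW4'
        omega
    · -- first step b → c
      have h' := h.symm; subst h'
      obtain ⟨w2, hw2, W2, hW2, hcs2, hl2, hss2⟩ := firstStep W1 hW1 hcd
      rw [hNc] at hw2
      simp only [Set.mem_insert_iff, Set.mem_singleton_iff] at hw2
      rcases hw2 with h | h | h
      · exact absurd (h ▸ hss2 W2.start_mem_support) hbs1
      · have h' := h.symm; subst h'
        have := loop_len W2 hW2
        omega
      · have h' := h.symm; subst h'
        obtain ⟨w3, hw3, W3, hW3, hds3, hl3, hss3⟩ := lastStep W2 hW2 hyd
        rw [hNd] at hw3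
        simp only [Set.mem_insert_iff, Set.mem_singleton_iff] at hw3
        have h3 : w3 = a := by
          rcases hw3 with h | h
          · exact absurd (h ▸ hss3 W3.end_mem_support) hcs2
          · exact h
        have h3' := h3.symm; subst h3'
        obtain ⟨w4, hw4, W4, hW4, has4, hl4, hss4⟩ := lastStep W3 hW3 hya
        rw [hNa] at hw4
        simp only [Set.mem_insert_iff, Set.mem_singleton_iff] at hw4
        have h4 : w4 = x := by
          rcases hw4 with h | h | h
          · exact absurd (h ▸ hss2 (hss3 (hss4 W4.end_mem_support))) hbs1
          · exact absurd (h ▸ hss4 W4.end_mem_support) hds3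
          · exact h
        have h4' := h4.symm; subst h4'
        have hdisj : ∀ z ∈ W4.support, z ∉ ({a, b, c, d} : Set V) := by
          intro z hz
          simp only [Set.mem_insert_iff, Set.mem_singleton_iff]
          rintro (rfl | rfl | rfl | rfl)
          · exact has4 hz
          · exact hbs1 (hss2 (hss3 (hss4 hz)))
          · exact hcs2 (hss3 (hss4 hz))
          · exact hds3 (hss4 hz)
        obtain ⟨W4', hl', hs'⟩ := down _ hB W4 hdisj
        have hW4' : W4'.IsPath := by
          rw [Walk.isPath_def, hs']; exact hW4.support_nodup
        have := huniv W4'.reverse hW4'.reverse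
        rw [Walk.length_reverse] at this
        omega
  · -- length ≡ 1 : b a x (path) y c d
    have hP0len : P0.length ≠ 0 := fun h => hxyne (Walk.eq_of_length_eq_zero h)
    have hnbr := support_nbr P0 hP0len
    obtain ⟨Q, hQl, hQs⟩ := up hle P0
    have hQpath : Q.IsPath := by rw [Walk.isPath_def, hQs]; exact hP0.support_nodup
    have haQ : a ∉ Q.support := by
      rw [hQs]; intro h
      have := hnbr a h; rw [ha] at this; exact Set.not_nonempty_empty this
    have hbQ : b ∉ Q.support := by
      rw [hQs]; intro h
      have := hnbr b h; rw [hb] at this; exact Set.not_nonempty_empty this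
    have hcQ : c ∉ Q.support := by
      rw [hQs]; intro h
      have := hnbr c h; rw [hc] at this; exact Set.not_nonempty_empty this
    have hdQ : d ∉ Q.support := by
      rw [hQs]; intro h
      have := hnbr d h; rw [hdd] at this; exact Set.not_nonempty_empty this
    refine ⟨Walk.cons hGba (Walk.cons hGax
      (Q.append (Walk.cons hGyc (Walk.cons hGcd Walk.nil)))), ?_, ?_⟩
    · rw [Walk.isPath_def]
      simp only [Walk.support_cons, Walk.support_append, Walk.support_nil,
        List.tail_cons, List.nodup_cons, List.mem_cons, List.mem_append,
        List.mem_singleton, List.not_mem_nil, or_false]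
      refine ⟨?_, ?_, ?_⟩
      · rintro (rfl | (h | (rfl | rfl)))
        · exact hab rfl
        · exact hbQ h
        · exact hbc rfl
        · exact hbd rfl
      · rintro (h | (rfl | rfl))
        · exact haQ h
        · exact hac rfl
        · exact had rfl
      · rw [List.nodup_append]
        refine ⟨hQpath.support_nodup, by simp [hcd], ?_⟩
        intro z hz
        simp only [List.mem_cons, List.mem_singleton, List.not_mem_nil, or_false]
        rintro _ (rfl | rfl) rfl
        · exact hcQ hz
        · exact hdQ hz
    · simp only [Walk.length_cons, Walk.length_append, Walk.length_nil, hQl]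
      omega
  · -- length 2 : b a d
    refine ⟨Walk.cons hGba (Walk.cons hGad Walk.nil), ?_,
      by norm_num [Walk.length_cons, Walk.length_nil]⟩
    rw [Walk.isPath_def]
    simp [Walk.support_cons, Walk.support_nil, hab.symm, hbd, had]

lemma base_case (r x y a b : V) (hd : ([r, x, y, a, b] : List V).Pairwise (· ≠ ·)) :
    Inv (SimpleGraph.fromEdgeSet
        {s(r, a), s(r, b), s(x, a), s(x, b), s(y, a), s(y, b)}) x y := by
  simp only [List.pairwise_cons] at hd
  obtain ⟨hr, hx, hy, ha, -⟩ := hd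
  have hrx : r ≠ x := hr _ (by simp)
  have hry : r ≠ y := hr _ (by simp)
  have hra : r ≠ a := hr _ (by simp)
  have hrb : r ≠ b := hr _ (by simp)
  have hxy : x ≠ y := hx _ (by simp)
  have hxa : x ≠ a := hx _ (by simp)
  have hxb : x ≠ b := hx _ (by simp)
  have hya : y ≠ a := hy _ (by simp)
  have hyb : y ≠ b := hy _ (by simp)
  have hab' : a ≠ b := ha _ (by simp)
  set G0 : SimpleGraph V := SimpleGraph.fromEdgeSet
      {s(r, a), s(r, b), s(x, a), s(x, b), s(y, a), s(y, b)} with hG0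
  have hadj : ∀ u v : V, G0.Adj u v ↔
      ((u = r ∧ v = a) ∨ (u = a ∧ v = r) ∨ (u = r ∧ v = b) ∨ (u = b ∧ v = r) ∨
       (u = x ∧ v = a) ∨ (u = a ∧ v = x) ∨ (u = x ∧ v = b) ∨ (u = b ∧ v = x) ∨
       (u = y ∧ v = a) ∨ (u = a ∧ v = y) ∨ (u = y ∧ v = b) ∨ (u = b ∧ v = y)) := by
    intro u v
    rw [hG0, fromEdgeSet_adj]
    simp only [Set.mem_insert_iff, Set.mem_singleton_iff, Sym2.eq_iff]
    constructor
    · rintro ⟨((⟨rfl,rfl⟩|⟨rfl,rfl⟩)|(⟨rfl,rfl⟩|⟨rfl,rfl⟩)|(⟨rfl,rfl⟩|⟨rfl,rfl⟩)|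
        (⟨rfl,rfl⟩|⟨rfl,rfl⟩)|(⟨rfl,rfl⟩|⟨rfl,rfl⟩)|(⟨rfl,rfl⟩|⟨rfl,rfl⟩)), hne⟩ <;> simp
    · rintro (⟨rfl, rfl⟩|⟨rfl, rfl⟩|⟨rfl, rfl⟩|⟨rfl, rfl⟩|⟨rfl, rfl⟩|⟨rfl, rfl⟩|
        ⟨rfl, rfl⟩|⟨rfl, rfl⟩|⟨rfl, rfl⟩|⟨rfl, rfl⟩|⟨rfl, rfl⟩|⟨rfl, rfl⟩) <;>
      exact ⟨by simp, by simp_all [ne_comm]⟩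
  have hNx : G0.neighborSet x = {a, b} := by
    ext v; simp only [mem_neighborSet, hadj, Set.mem_insert_iff, Set.mem_singleton_iff]
    constructor
    · rintro (⟨h1,h2⟩|⟨h1,h2⟩|⟨h1,h2⟩|⟨h1,h2⟩|⟨h1,h2⟩|⟨h1,h2⟩|⟨h1,h2⟩|⟨h1,h2⟩|⟨h1,h2⟩|⟨h1,h2⟩|⟨h1,h2⟩|⟨h1,h2⟩) <;>
      first
      | exact Or.inl h2 | exact Or.inr h2 | exact Or.inr (Or.inl h2) | exact Or.inr (Or.inr h2)
      | exact absurd h1 hrx | exact absurd h1.symm hrx | exact absurd h1 hry | exact absurd h1.symm hry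
      | exact absurd h1 hra | exact absurd h1.symm hra | exact absurd h1 hrb | exact absurd h1.symm hrb
      | exact absurd h1 hxy | exact absurd h1.symm hxy | exact absurd h1 hxa | exact absurd h1.symm hxa
      | exact absurd h1 hxb | exact absurd h1.symm hxb | exact absurd h1 hya | exact absurd h1.symm hya
      | exact absurd h1 hyb | exact absurd h1.symm hyb | exact absurd h1 hab' | exact absurd h1.symm hab'
      | exact absurd h2 hrx | exact absurd h2.symm hrx | exact absurd h2 hry | exact absurd h2.symm hry
      | exact absurd h2 hra | exact absurd h2.symm hra | exact absurd h2 hrb | exact absurd h2.symm hrb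
      | exact absurd h2 hxy | exact absurd h2.symm hxy | exact absurd h2 hxa | exact absurd h2.symm hxa
      | exact absurd h2 hxb | exact absurd h2.symm hxb | exact absurd h2 hya | exact absurd h2.symm hya
      | exact absurd h2 hyb | exact absurd h2.symm hyb | exact absurd h2 hab' | exact absurd h2.symm hab'
    · rintro (rfl | rfl) <;> simp
  have hNy : G0.neighborSet y = {a, b} := by
    ext v; simp only [mem_neighborSet, hadj, Set.mem_insert_iff, Set.mem_singleton_iff]
    constructor
    · rintro (⟨h1,h2⟩|⟨h1,h2⟩|⟨h1,h2⟩|⟨h1,h2⟩|⟨h1,h2⟩|⟨h1,h2⟩|⟨h1,h2⟩|⟨h1,h2⟩|⟨h1,h2⟩|⟨h1,h2⟩|⟨h1,h2⟩|⟨h1,h2⟩) <;>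
      first
      | exact Or.inl h2 | exact Or.inr h2 | exact Or.inr (Or.inl h2) | exact Or.inr (Or.inr h2)
      | exact absurd h1 hrx | exact absurd h1.symm hrx | exact absurd h1 hry | exact absurd h1.symm hry
      | exact absurd h1 hra | exact absurd h1.symm hra | exact absurd h1 hrb | exact absurd h1.symm hrb
      | exact absurd h1 hxy | exact absurd h1.symm hxy | exact absurd h1 hxa | exact absurd h1.symm hxa
      | exact absurd h1 hxb | exact absurd h1.symm hxb | exact absurd h1 hya | exact absurd h1.symm hya
      | exact absurd h1 hyb | exact absurd h1.symm hyb | exact absurd h1 hab' | exact absurd h1.symm hab'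
      | exact absurd h2 hrx | exact absurd h2.symm hrx | exact absurd h2 hry | exact absurd h2.symm hry
      | exact absurd h2 hra | exact absurd h2.symm hra | exact absurd h2 hrb | exact absurd h2.symm hrb
      | exact absurd h2 hxy | exact absurd h2.symm hxy | exact absurd h2 hxa | exact absurd h2.symm hxa
      | exact absurd h2 hxb | exact absurd h2.symm hxb | exact absurd h2 hya | exact absurd h2.symm hya
      | exact absurd h2 hyb | exact absurd h2.symm hyb | exact absurd h2 hab' | exact absurd h2.symm hab'
    · rintro (rfl | rfl) <;> simp
  have hNa : G0.neighborSet a = {r, x, y} := by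
    ext v; simp only [mem_neighborSet, hadj, Set.mem_insert_iff, Set.mem_singleton_iff]
    constructor
    · rintro (⟨h1,h2⟩|⟨h1,h2⟩|⟨h1,h2⟩|⟨h1,h2⟩|⟨h1,h2⟩|⟨h1,h2⟩|⟨h1,h2⟩|⟨h1,h2⟩|⟨h1,h2⟩|⟨h1,h2⟩|⟨h1,h2⟩|⟨h1,h2⟩) <;>
      first
      | exact Or.inl h2 | exact Or.inr h2 | exact Or.inr (Or.inl h2) | exact Or.inr (Or.inr h2)
      | exact absurd h1 hrx | exact absurd h1.symm hrx | exact absurd h1 hry | exact absurd h1.symm hry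
      | exact absurd h1 hra | exact absurd h1.symm hra | exact absurd h1 hrb | exact absurd h1.symm hrb
      | exact absurd h1 hxy | exact absurd h1.symm hxy | exact absurd h1 hxa | exact absurd h1.symm hxa
      | exact absurd h1 hxb | exact absurd h1.symm hxb | exact absurd h1 hya | exact absurd h1.symm hya
      | exact absurd h1 hyb | exact absurd h1.symm hyb | exact absurd h1 hab' | exact absurd h1.symm hab'
      | exact absurd h2 hrx | exact absurd h2.symm hrx | exact absurd h2 hry | exact absurd h2.symm hry
      | exact absurd h2 hra | exact absurd h2.symm hra | exact absurd h2 hrb | exact absurd h2.symm hrb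
      | exact absurd h2 hxy | exact absurd h2.symm hxy | exact absurd h2 hxa | exact absurd h2.symm hxa
      | exact absurd h2 hxb | exact absurd h2.symm hxb | exact absurd h2 hya | exact absurd h2.symm hya
      | exact absurd h2 hyb | exact absurd h2.symm hyb | exact absurd h2 hab' | exact absurd h2.symm hab'
    · rintro (rfl | rfl | rfl) <;> simp
  have hNb : G0.neighborSet b = {r, x, y} := by
    ext v; simp only [mem_neighborSet, hadj, Set.mem_insert_iff, Set.mem_singleton_iff]
    constructor
    · rintro (⟨h1,h2⟩|⟨h1,h2⟩|⟨h1,h2⟩|⟨h1,h2⟩|⟨h1,h2⟩|⟨h1,h2⟩|⟨h1,h2⟩|⟨h1,h2⟩|⟨h1,h2⟩|⟨h1,h2⟩|⟨h1,h2⟩|⟨h1,h2⟩) <;>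
      first
      | exact Or.inl h2 | exact Or.inr h2 | exact Or.inr (Or.inl h2) | exact Or.inr (Or.inr h2)
      | exact absurd h1 hrx | exact absurd h1.symm hrx | exact absurd h1 hry | exact absurd h1.symm hry
      | exact absurd h1 hra | exact absurd h1.symm hra | exact absurd h1 hrb | exact absurd h1.symm hrb
      | exact absurd h1 hxy | exact absurd h1.symm hxy | exact absurd h1 hxa | exact absurd h1.symm hxa
      | exact absurd h1 hxb | exact absurd h1.symm hxb | exact absurd h1 hya | exact absurd h1.symm hya
      | exact absurd h1 hyb | exact absurd h1.symm hyb | exact absurd h1 hab' | exact absurd h1.symm hab'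
      | exact absurd h2 hrx | exact absurd h2.symm hrx | exact absurd h2 hry | exact absurd h2.symm hry
      | exact absurd h2 hra | exact absurd h2.symm hra | exact absurd h2 hrb | exact absurd h2.symm hrb
      | exact absurd h2 hxy | exact absurd h2.symm hxy | exact absurd h2 hxa | exact absurd h2.symm hxa
      | exact absurd h2 hxb | exact absurd h2.symm hxb | exact absurd h2 hya | exact absurd h2.symm hya
      | exact absurd h2 hyb | exact absurd h2.symm hyb | exact absurd h2 hab' | exact absurd h2.symm hab'
    · rintro (rfl | rfl | rfl) <;> simp
  have hNr : G0.neighborSet r = {a, b} := by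
    ext v; simp only [mem_neighborSet, hadj, Set.mem_insert_iff, Set.mem_singleton_iff]
    constructor
    · rintro (⟨h1,h2⟩|⟨h1,h2⟩|⟨h1,h2⟩|⟨h1,h2⟩|⟨h1,h2⟩|⟨h1,h2⟩|⟨h1,h2⟩|⟨h1,h2⟩|⟨h1,h2⟩|⟨h1,h2⟩|⟨h1,h2⟩|⟨h1,h2⟩) <;>
      first
      | exact Or.inl h2 | exact Or.inr h2 | exact Or.inr (Or.inl h2) | exact Or.inr (Or.inr h2)
      | exact absurd h1 hrx | exact absurd h1.symm hrx | exact absurd h1 hry | exact absurd h1.symm hry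
      | exact absurd h1 hra | exact absurd h1.symm hra | exact absurd h1 hrb | exact absurd h1.symm hrb
      | exact absurd h1 hxy | exact absurd h1.symm hxy | exact absurd h1 hxa | exact absurd h1.symm hxa
      | exact absurd h1 hxb | exact absurd h1.symm hxb | exact absurd h1 hya | exact absurd h1.symm hya
      | exact absurd h1 hyb | exact absurd h1.symm hyb | exact absurd h1 hab' | exact absurd h1.symm hab'
      | exact absurd h2 hrx | exact absurd h2.symm hrx | exact absurd h2 hry | exact absurd h2.symm hry
      | exact absurd h2 hra | exact absurd h2.symm hra | exact absurd h2 hrb | exact absurd h2.symm hrb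
      | exact absurd h2 hxy | exact absurd h2.symm hxy | exact absurd h2 hxa | exact absurd h2.symm hxa
      | exact absurd h2 hxb | exact absurd h2.symm hxb | exact absurd h2 hya | exact absurd h2.symm hya
      | exact absurd h2 hyb | exact absurd h2.symm hyb | exact absurd h2 hab' | exact absurd h2.symm hab'
    · rintro (rfl | rfl) <;> simp
  left
  refine ⟨by rw [hadj]; rintro (⟨h1,h2⟩|⟨h1,h2⟩|⟨h1,h2⟩|⟨h1,h2⟩|⟨h1,h2⟩|⟨h1,h2⟩|⟨h1,h2⟩|⟨h1,h2⟩|⟨h1,h2⟩|⟨h1,h2⟩|⟨h1,h2⟩|⟨h1,h2⟩) <;>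
      first
      | exact Or.inl h2 | exact Or.inr h2 | exact Or.inr (Or.inl h2) | exact Or.inr (Or.inr h2)
      | exact absurd h1 hrx | exact absurd h1.symm hrx | exact absurd h1 hry | exact absurd h1.symm hry
      | exact absurd h1 hra | exact absurd h1.symm hra | exact absurd h1 hrb | exact absurd h1.symm hrb
      | exact absurd h1 hxy | exact absurd h1.symm hxy | exact absurd h1 hxa | exact absurd h1.symm hxa
      | exact absurd h1 hxb | exact absurd h1.symm hxb | exact absurd h1 hya | exact absurd h1.symm hya
      | exact absurd h1 hyb | exact absurd h1.symm hyb | exact absurd h1 hab' | exact absurd h1.symm hab'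
      | exact absurd h2 hrx | exact absurd h2.symm hrx | exact absurd h2 hry | exact absurd h2.symm hry
      | exact absurd h2 hra | exact absurd h2.symm hra | exact absurd h2 hrb | exact absurd h2.symm hrb
      | exact absurd h2 hxy | exact absurd h2.symm hxy | exact absurd h2 hxa | exact absurd h2.symm hxa
      | exact absurd h2 hxb | exact absurd h2.symm hxb | exact absurd h2 hya | exact absurd h2.symm hya
      | exact absurd h2 hyb | exact absurd h2.symm hyb | exact absurd h2 hab' | exact absurd h2.symm hab', by rw [hNx, hNy], ?_, ?_, ?_⟩
  · -- universal
    intro W hW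
    obtain ⟨w1, hw1, W1, hW1, hxs1, hl1, hss1⟩ := firstStep W hW hxy
    rw [hNx] at hw1
    simp only [Set.mem_insert_iff, Set.mem_singleton_iff] at hw1
    rcases hw1 with h | h
    · subst h
      obtain ⟨w2, hw2, W2, hW2, has2, hl2, hss2⟩ := firstStep W1 hW1 hya.symm
      rw [hNa] at hw2
      simp only [Set.mem_insert_iff, Set.mem_singleton_iff] at hw2
      rcases hw2 with h | h | h
      · subst h
        obtain ⟨w3, hw3, W3, hW3, hrs3, hl3, hss3⟩ := firstStep W2 hW2 hry
        rw [hNr] at hw3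
        simp only [Set.mem_insert_iff, Set.mem_singleton_iff] at hw3
        have h3 : w3 = b := by
          rcases hw3 with h | h
          · exact absurd (h ▸ hss3 W3.start_mem_support) has2
          · exact h
        subst h3
        obtain ⟨w4, hw4, W4, hW4, hbs4, hl4, hss4⟩ := firstStep W3 hW3 hyb.symm
        rw [hNb] at hw4
        simp only [Set.mem_insert_iff, Set.mem_singleton_iff] at hw4
        have h4 : w4 = y := by
          rcases hw4 with h | h | h
          · exact absurd (h ▸ hss4 W4.start_mem_support) hrs3
          · exact absurd (h ▸ hss2 (hss3 (hss4 W4.start_mem_support))) hxs1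
          · exact h
        subst h4
        have := loop_len W4 hW4
        omega
      · subst h
        exact absurd (hss2 W2.start_mem_support) hxs1
      · subst h
        have := loop_len W2 hW2
        omega
    · subst h
      obtain ⟨w2, hw2, W2, hW2, hbs2, hl2, hss2⟩ := firstStep W1 hW1 hyb.symm
      rw [hNb] at hw2
      simp only [Set.mem_insert_iff, Set.mem_singleton_iff] at hw2
      rcases hw2 with h | h | h
      · subst h
        obtain ⟨w3, hw3, W3, hW3, hrs3, hl3, hss3⟩ := firstStep W2 hW2 hry
        rw [hNr] at hw3
        simp only [Set.mem_insert_iff, Set.mem_singleton_iff] at hw3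
        have h3 : w3 = a := by
          rcases hw3 with h | h
          · exact h
          · exact absurd (h ▸ hss3 W3.start_mem_support) hbs2
        subst h3
        obtain ⟨w4, hw4, W4, hW4, has4, hl4, hss4⟩ := firstStep W3 hW3 hya.symm
        rw [hNa] at hw4
        simp only [Set.mem_insert_iff, Set.mem_singleton_iff] at hw4
        have h4 : w4 = y := by
          rcases hw4 with h | h | h
          · exact absurd (h ▸ hss4 W4.start_mem_support) hrs3
          · exact absurd (h ▸ hss2 (hss3 (hss4 W4.start_mem_support))) hxs1
          · exact h
        subst h4
        have := loop_len W4 hW4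
        omega
      · subst h
        exact absurd (hss2 W2.start_mem_support) hxs1
      · subst h
        have := loop_len W2 hW2
        omega
  · -- length 4 path
    have h1 : G0.Adj x a := by rw [hadj]; simp
    have h2 : G0.Adj a r := by rw [hadj]; simp
    have h3 : G0.Adj r b := by rw [hadj]; simp
    have h4 : G0.Adj b y := by rw [hadj]; simp
    refine ⟨Walk.cons h1 (Walk.cons h2 (Walk.cons h3 (Walk.cons h4 Walk.nil))), ?_, by norm_num [Walk.length_cons, Walk.length_nil]⟩
    simp [Walk.isPath_def, Walk.support_cons, Walk.support_nil, hrx.symm, hry,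
      hra.symm, hrb, hxy, hxa, hxb, hya.symm, hyb.symm, hab']
  · -- length 2 path
    have h1 : G0.Adj x a := by rw [hadj]; simp
    have h2 : G0.Adj a y := by rw [hadj]; simp
    refine ⟨Walk.cons h1 (Walk.cons h2 Walk.nil), ?_, by norm_num [Walk.length_cons, Walk.length_nil]⟩
    simp [Walk.isPath_def, Walk.support_cons, Walk.support_nil, hxy, hxa, hya.symm]


lemma main {G : SimpleGraph V} {r x y : V} (h : ExcAux G r x y) : Inv G x y := by
  induction h with
  | base r x y a b hd => exact base_case r x y a b hd
  | symm G r x y h ih => exact inv_symm ih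
  | addPath H r x y p q h hn hpq hp hq ih => exact addPath_case ih hn hpq hp hq
  | addTwin H r x y w a h hadj hNx hw ih => exact addTwin_case ih hadj hNx hw
  | addSquare H r x y a b c d h hadj hd ha hb hc hdd ih =>
    exact addSquare_case ih hadj hd ha hb hc hdd

end ExcProof

/-- Let `G` be an exceptional graph with root `r` and further degree-2 vertices `x, y`.
Then either `x` and `y` are non-adjacent with the same neighbourhood and the set of
lengths of `x`–`y` paths in `G` is, modulo 3, exactly `{1, 2}`; or `x` and `y` are
adjacent and the set of lengths of `x`–`y` paths in `G` is, modulo 3, exactly `{0, 1}`. -/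

theorem stmt_7 {V : Type*} (G : SimpleGraph V) (r x y : V)
    (hG : ExcAux G r x y) :
    (¬ G.Adj x y ∧ G.neighborSet x = G.neighborSet y ∧
      (∀ p : G.Walk x y, p.IsPath → p.length % 3 = 1 ∨ p.length % 3 = 2) ∧
      (∃ p : G.Walk x y, p.IsPath ∧ p.length % 3 = 1) ∧
      (∃ p : G.Walk x y, p.IsPath ∧ p.length % 3 = 2)) ∨
    (G.Adj x y ∧
      (∀ p : G.Walk x y, p.IsPath → p.length % 3 = 0 ∨ p.length % 3 = 1) ∧
      (∃ p : G.Walk x y, p.IsPath ∧ p.length % 3 = 0) ∧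
      (∃ p : G.Walk x y, p.IsPath ∧ p.length % 3 = 1)) := by
  rcases ExcProof.main hG with ⟨h1, h2, h3, h4, h5⟩ | ⟨h1, h2, h3, h4, -, -⟩
  · exact Or.inl ⟨h1, h2, h3, h4, h5⟩
  · exact Or.inr ⟨h1, h2, h3, h4⟩
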